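/- Let μ, γ₁, γ₂ ∈ ℝ with μ > 0, γ₂ > γ₁ > 0 and γ₁ − 2γ₂ > −4/μ. Then every complex root λ of the quadratic z² − (2 − γ₂μ)z + (1 + (γ₁ − γ₂)μ) satisfies |λ| < 1. -/

import Mathlib

/-- under the conditions γ₂ > γ₁ > 0 and γ₁ - 2γ₂ > -4/μ (μ > 0),
every complex root of z² - (2 - γ₂μ)z + (1 + (γ₁ - γ₂)μ) lies strictly inside
the unit circle. -/
theorem stmt_4 (μ γ₁ γ₂ : ℝ) (hμ : 0 < μ) (h1 : 0 < γ₁) (h2 : γ₁ < γ₂)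
    (h3 : γ₁ - 2 * γ₂ > -4 / μ) :
    ∀ lam : ℂ,
      lam ^ 2 - ((2 - γ₂ * μ : ℝ) : ℂ) * lam + ((1 + (γ₁ - γ₂) * μ : ℝ) : ℂ) = 0 →
      ‖lam‖ < 1 := by
  intro lam hroot
  set b : ℝ := 2 - γ₂ * μ with hb
  set c : ℝ := 1 + (γ₁ - γ₂) * μ with hc
  have hμ' : μ ≠ 0 := ne_of_gt hμ
  have hp1 : 1 - b + c > 0 := by
    simp only [hb, hc]; nlinarith
  have hpm1 : 1 + b + c > 0 := by
    have : (γ₁ - 2 * γ₂) * μ > -4 := by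
      have := (div_lt_iff₀ hμ).mp h3  -- -4/μ < γ₁-2γ₂ → -4 < (γ₁-2γ₂)*μ
      linarith
    simp only [hb, hc]; nlinarith
  have hc1 : c < 1 := by simp only [hc]; nlinarith
  set x := lam.re with hx
  set y := lam.im with hy
  have hre : x^2 - y^2 - b*x + c = 0 := by
    have := congrArg Complex.re hroot
    simp [pow_two, Complex.mul_re, Complex.mul_im] at this
    linarith [this]
  have him : y * (2*x - b) = 0 := by
    have := congrArg Complex.im hroot
    simp [pow_two, Complex.mul_re, Complex.mul_im] at this
    nlinarith [this]
  have habs : (‖lam‖)^2 = x^2 + y^2 := by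
    rw [Complex.sq_norm, Complex.normSq_apply]; ring
  clear_value x y b c
  clear hroot
  have hlt : x^2 + y^2 < 1 := by
    rcases mul_eq_zero.mp him with hy0 | hxb
    · -- y = 0, real root
      have hq : x^2 - b*x + c = 0 := by rw [hy0] at hre; linarith
      have hcm1 : -1 < c := by linarith
      have : x^2 < 1 := by
        by_contra hcon
        push_neg at hcon
        have hx2 : 1 ≤ x^2 := hcon
        have hx2pos : (0:ℝ) < x^2 := by linarith
        have hbx : b * x = x^2 + c := by linarith
        have hbx2 : (b*x)^2 = (x^2+c)^2 := by rw [hbx]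
        have h5 : (1+c)^2 * x^2 > (x^2+c)^2 := by
          nlinarith [mul_pos (mul_pos hp1 hpm1) hx2pos]
        have key : (x^2 - 1) * (x^2 - c^2) ≥ 0 :=
          mul_nonneg (by linarith) (by nlinarith)
        nlinarith [key, h5]
      rw [hy0]; nlinarith
    · -- 2x = b
      have hxb' : b = 2*x := by linarith
      have hy2 : y^2 = c - x^2 := by rw [hxb'] at hre; nlinarith [hre]
      linarith
  have hsq : ‖lam‖ ^ 2 < 1 ^ 2 := by rw [habs]; simpa using hlt
  exact lt_of_pow_lt_pow_left₀ 2 zero_le_one hsq
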